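/- Let $h_1 \le h_2 \le \cdots \le h_n$ be positive reals and $r \le n$ a positive integer with $(r)h_n \ge \sum_{i=1}^n h_i$ possibly failing. Define $k = \min\{ s \mid 0 \le s \le r,\ (r-s) h_{n-s} < \sum_{i=1}^{n-s} h_i \}$ (assuming such an $s$ exists) and $M = \frac{1}{r-k}\sum_{i=1}^{n-k} h_i$. Then $h_{n-k} < M \le h_{n-k+1}$ (with the convention $h_{n+1} = \infty$), and consequently the probabilities $\pi_i = r \frac{h_i \wedge M}{\sum_{j=1}^n (h_j \wedge M)}$ satisfy $0 < \pi_i \le 1$ for all $i$ and $\sum_{i=1}^n \pi_i = r$. -/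

import Mathlib

open Finset

/-- Construction of the threshold `M` in the optimal subsampling probabilities:
with `k` the least `s ≤ r` such that `(r-s) h (n-s) < ∑_{i=1}^{n-s} h i` and
`M = (∑_{i=1}^{n-k} h i) / (r-k)`, one has `h (n-k) < M ≤ h (n-k+1)` (the upper
bound read as vacuous when `k = 0`, i.e. `h (n+1) = ∞`), and the probabilities
`π i = r (h i ⊓ M) / ∑ j (h j ⊓ M)` lie in `(0,1]` and sum to `r`. -/
theorem stmt_1 (n r k : ℕ) (hr : 0 < r) (hrn : r ≤ n)
    (h : ℕ → ℝ)
    (hpos : ∀ i ∈ Finset.Icc 1 n, 0 < h i)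
    (hmono : ∀ i j, 1 ≤ i → i ≤ j → j ≤ n → h i ≤ h j)
    (hkr : k < r)
    (hk : ((r : ℝ) - k) * h (n - k) < ∑ i ∈ Finset.Icc 1 (n - k), h i)
    (hkmin : ∀ s : ℕ, s < k →
      ¬ (((r : ℝ) - s) * h (n - s) < ∑ i ∈ Finset.Icc 1 (n - s), h i))
    (M : ℝ) (hM : M = (∑ i ∈ Finset.Icc 1 (n - k), h i) / ((r : ℝ) - k))
    (π : ℕ → ℝ)
    (hπ : ∀ i, π i = (r : ℝ) * min (h i) M / ∑ j ∈ Finset.Icc 1 n, min (h j) M) :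
    h (n - k) < M ∧ (k = 0 ∨ M ≤ h (n - k + 1)) ∧
      (∀ i ∈ Finset.Icc 1 n, 0 < π i ∧ π i ≤ 1) ∧
      ∑ i ∈ Finset.Icc 1 n, π i = (r : ℝ) := by
  have hkn : k ≤ n := le_trans (le_of_lt hkr) hrn
  have hrk : (0:ℝ) < (r:ℝ) - k := by
    have : (k:ℝ) < r := by exact_mod_cast hkr
    linarith
  have hnk1 : 1 ≤ n - k := by omega
  have hnkn : n - k ≤ n := Nat.sub_le n k
  set S := ∑ i ∈ Finset.Icc 1 (n-k), h i with hS
  have hSpos : 0 < S :=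
    Finset.sum_pos (fun i hi => by
      have hi' := Finset.mem_Icc.mp hi
      exact hpos i (Finset.mem_Icc.mpr ⟨hi'.1, le_trans hi'.2 hnkn⟩))
      ⟨n - k, Finset.mem_Icc.mpr ⟨hnk1, le_refl _⟩⟩
  have hMpos : 0 < M := by rw [hM]; positivity
  have h1 : h (n - k) < M := by
    rw [hM, lt_div_iff₀ hrk, mul_comm]
    exact hk
  have h2 : k = 0 ∨ M ≤ h (n - k + 1) := by
    rcases Nat.eq_zero_or_pos k with hk0 | hk0
    · exact Or.inl hk0
    · right
      have hmin := hkmin (k - 1) (by omega)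
      have hnkk : n - (k - 1) = n - k + 1 := by omega
      rw [hnkk] at hmin
      push_neg at hmin
      have hcast : ((k - 1 : ℕ) : ℝ) = (k : ℝ) - 1 := by
        rw [Nat.cast_sub hk0]; norm_num
      rw [hcast] at hmin
      have hsum : ∑ i ∈ Finset.Icc 1 (n - k + 1), h i = S + h (n - k + 1) := by
        rw [hS, Finset.sum_Icc_succ_top (by omega : 1 ≤ n - k + 1)]
      rw [hsum] at hmin
      rw [hM, div_le_iff₀ hrk]
      nlinarith [hmin]
  have hminle : ∀ j ∈ Finset.Icc 1 (n - k), min (h j) M = h j := by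
    intro j hj
    have hj' := Finset.mem_Icc.mp hj
    have : h j ≤ h (n - k) := hmono j (n - k) hj'.1 hj'.2 hnkn
    exact min_eq_left (le_of_lt (lt_of_le_of_lt this h1))
  have hminge : ∀ j ∈ Finset.Icc (n - k + 1) n, min (h j) M = M := by
    intro j hj
    have hj' := Finset.mem_Icc.mp hj
    have hk0 : 0 < k := by omega
    have h2' : M ≤ h (n - k + 1) := h2.resolve_left (by omega)
    have : h (n - k + 1) ≤ h j := hmono (n - k + 1) j (by omega) hj'.1 hj'.2
    exact min_eq_right (le_trans h2' this)
  have hT : ∑ j ∈ Finset.Icc 1 n, min (h j) M = (r : ℝ) * M := by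
    have hsplit : (∑ j ∈ Finset.Ioc 0 (n - k), min (h j) M)
        + ∑ j ∈ Finset.Ioc (n - k) n, min (h j) M
        = ∑ j ∈ Finset.Ioc 0 n, min (h j) M :=
      Finset.sum_Ioc_consecutive _ (Nat.zero_le _) hnkn
    have e1 : Finset.Icc 1 n = Finset.Ioc 0 n := by
      rw [← Finset.Icc_add_one_left_eq_Ioc, zero_add]
    have e2 : Finset.Icc 1 (n - k) = Finset.Ioc 0 (n - k) := by
      rw [← Finset.Icc_add_one_left_eq_Ioc, zero_add]
    have e3 : Finset.Icc (n - k + 1) n = Finset.Ioc (n - k) n := by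
      rw [← Finset.Icc_add_one_left_eq_Ioc]
    rw [e1, ← hsplit, ← e2, ← e3,
      Finset.sum_congr rfl hminle, Finset.sum_congr rfl hminge,
      Finset.sum_const, nsmul_eq_mul]
    have hcard : (Finset.Icc (n - k + 1) n).card = k := by
      rw [Nat.card_Icc]; omega
    rw [hcard]
    have hSM : S = ((r : ℝ) - k) * M := by
      rw [hM]; field_simp
    show S + (k:ℝ) * M = (r:ℝ) * M
    rw [hSM]; ring
  have hTpos : 0 < ∑ j ∈ Finset.Icc 1 n, min (h j) M := by
    rw [hT]; positivity
  refine ⟨h1, h2, ?_, ?_⟩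
  · intro i hi
    have hipos := hpos i hi
    have hminpos : 0 < min (h i) M := lt_min hipos hMpos
    constructor
    · rw [hπ i]; positivity
    · rw [hπ i, div_le_one hTpos, hT]
      exact mul_le_mul_of_nonneg_left (min_le_right _ _) (Nat.cast_nonneg r)
  · have : ∑ i ∈ Finset.Icc 1 n, π i
        = (∑ i ∈ Finset.Icc 1 n, (r : ℝ) * min (h i) M)
          / ∑ j ∈ Finset.Icc 1 n, min (h j) M := by
      rw [Finset.sum_div]
      exact Finset.sum_congr rfl fun i _ => hπ i
    rw [this, ← Finset.mul_sum, mul_div_assoc, div_self (ne_of_gt hTpos), mul_one]
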